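/- Let (V, θ) be a regular semisimple Higgs bundle of rank r on a Riemann surface Y, with spectral covering π : Σ → Y an r-sheeted covering map, and let L be the line bundle on Σ with π_*L ≅ V inducing θ. Then pushforward of metrics induces a bijection between flat Hermitian metrics on L and decoupled harmonic metrics on (V, θ). -/

import Mathlib

attribute [local instance] Classical.propDecidable

open Matrix
open scoped ComplexOrder

/-- A system of `r` holomorphic sections over `U` enumerating, without repetition, the
fibers of the spectral covering `S ⊆ Y × ℂ ⊆ T*Y` (first coordinate: base point, second
coordinate: eigenvalue of the Higgs field).  Injectivity of `i ↦ s i z` encodes regular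
semisimplicity (the `r` eigenvalues are pairwise distinct). -/
def IsSectionSystem (r : ℕ) (S : Set (ℂ × ℂ)) (U : Set ℂ) (s : Fin r → ℂ → ℂ) : Prop :=
  (∀ i, DifferentiableOn ℂ (s i) U) ∧
  (∀ i, ∀ z ∈ U, (z, s i z) ∈ S) ∧
  (∀ z ∈ U, ∀ q ∈ S, q.1 = z → ∃ i, q = (z, s i z)) ∧
  (∀ z ∈ U, Function.Injective fun i => s i z)

/-- The Gram matrix of a Hermitian pairing `h` on `V = π_*L` in the local holomorphic
frame given by a section system. -/
noncomputable def gramMatrix (r : ℕ) (h : ℂ × ℂ → ℂ × ℂ → ℂ) (s : Fin r → ℂ → ℂ)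
    (z : ℂ) : Matrix (Fin r) (Fin r) ℂ :=
  Matrix.of fun i j => h (z, s i z) (z, s j z)

/-- Flatness of the Chern connection of `h` on `U`: locally the Gram matrix is
`Gᴴ·G` with `G` holomorphic and invertible (existence of local parallel holomorphic
orthonormal frames), i.e. `R(h) = 0`. -/
def IsFlatGram (r : ℕ) (h : ℂ × ℂ → ℂ × ℂ → ℂ) (s : Fin r → ℂ → ℂ) (U : Set ℂ) : Prop :=
  ∀ z ∈ U, ∃ V ∈ nhds z, ∃ G : ℂ → Matrix (Fin r) (Fin r) ℂ,
    (∀ i j, DifferentiableOn ℂ (fun w => G w i j) (V ∩ U)) ∧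
    ∀ w ∈ V ∩ U, IsUnit (G w).det ∧ gramMatrix r h s w = (G w)ᴴ * G w

/-- `h` is a decoupled harmonic metric of the regular semisimple Higgs bundle
`(V, θ) = π_*(L, eigenvalue)`: in every local holomorphic eigenframe, the Gram matrix `M`
is positive definite, the Chern connection is flat (`R(h) = 0`), and `[θ, θ†_h] = 0`,
i.e. `D` commutes with `θ†_h = M⁻¹·Dᴴ·M` where `D = diag(eigenvalues)`. -/
def IsDecoupledHarmonicMetric (r : ℕ) (S : Set (ℂ × ℂ)) (Y : Set ℂ)
    (h : ℂ × ℂ → ℂ × ℂ → ℂ) : Prop :=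
  ∀ U : Set ℂ, IsOpen U → U ⊆ Y → ∀ s : Fin r → ℂ → ℂ, IsSectionSystem r S U s →
    (∀ z ∈ U, (gramMatrix r h s z).PosDef) ∧
    IsFlatGram r h s U ∧
    (∀ z ∈ U,
      Matrix.diagonal (fun i => s i z) *
        ((gramMatrix r h s z)⁻¹ * (Matrix.diagonal fun i => s i z)ᴴ * gramMatrix r h s z)
      = ((gramMatrix r h s z)⁻¹ * (Matrix.diagonal fun i => s i z)ᴴ * gramMatrix r h s z) *
          Matrix.diagonal (fun i => s i z))

/-- A flat metric on the line bundle `L` on the spectral curve `S`: a positive function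
`H` on `S` which, pulled back by each local holomorphic section, is `exp(Re g)` with
`g` holomorphic (i.e. `log H` is harmonic: the Chern connection of `(L, H)` is flat). -/
def IsFlatLineMetric (r : ℕ) (S : Set (ℂ × ℂ)) (Y : Set ℂ) (H : ℂ × ℂ → ℝ) : Prop :=
  ∀ U : Set ℂ, IsOpen U → U ⊆ Y → ∀ s : Fin r → ℂ → ℂ, IsSectionSystem r S U s →
    ∀ i, ∀ z ∈ U, ∃ V ∈ nhds z, ∃ g : ℂ → ℂ, DifferentiableOn ℂ g (V ∩ U) ∧
      ∀ w ∈ V ∩ U, H (w, s i w) = Real.exp ((g w).re)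

/-- Let `(V, θ)` be a regular semisimple Higgs bundle of rank `r` on `Y`, with spectral
covering `π : S → Y` an `r`-sheeted covering (encoded by local holomorphic section
systems) and `L` the line bundle on `S` with `π_*L ≅ V` inducing `θ`.  Then pushforward
of metrics, `H ↦ (h : h(q,q') = H q` if `q = q' ∈ S`, else `0)` — the orthogonal direct
sum metric — is a bijection from flat Hermitian metrics on `L` (normalized by `H = 1`
off `S`) onto decoupled harmonic metrics on `(V, θ)` (normalized to vanish off pairs of
points of `S` in a common fiber). -/

private lemma aux_diffOn_prod {ι : Type*} (t : Finset ι) (U : Set ℂ)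
    (f : ι → ℂ → ℂ) (hf : ∀ i ∈ t, DifferentiableOn ℂ (f i) U) :
    DifferentiableOn ℂ (fun w => ∏ i ∈ t, f i w) U := by
  classical
  induction t using Finset.induction with
  | empty => simpa using differentiableOn_const (1 : ℂ)
  | @insert a t ha ih =>
    simp only [Finset.prod_insert ha]
    exact (hf a (Finset.mem_insert_self a t)).mul
      (ih fun i hi => hf i (Finset.mem_insert_of_mem hi))

private lemma aux_diffOn_det {n : ℕ} (A : ℂ → Matrix (Fin n) (Fin n) ℂ) (U : Set ℂ)
    (hA : ∀ i j, DifferentiableOn ℂ (fun w => A w i j) U) :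
    DifferentiableOn ℂ (fun w => (A w).det) U := by
  simp only [Matrix.det_apply']
  apply DifferentiableOn.fun_sum
  intro σ _
  exact ((aux_diffOn_prod Finset.univ U (fun i w => A w (σ i) i)
    (fun i _ => hA (σ i) i)).const_mul _)

private lemma aux_posdef_diag {n : ℕ} (M : Matrix (Fin n) (Fin n) ℂ) (hM : M.PosDef)
    (i : Fin n) : 0 < M i i := by
  classical
  exact hM.diag_pos

/-- key structure lemma: posdef + commutation + distinct eigenvalues forces gram diagonal -/
private lemma aux_gram_offdiag {n : ℕ} (M : Matrix (Fin n) (Fin n) ℂ) (d : Fin n → ℂ)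
    (hM : M.PosDef) (hd : Function.Injective d)
    (hcomm : Matrix.diagonal d * (M⁻¹ * (Matrix.diagonal d)ᴴ * M)
      = (M⁻¹ * (Matrix.diagonal d)ᴴ * M) * Matrix.diagonal d)
    {i j : Fin n} (hij : i ≠ j) : M i j = 0 := by
  classical
  set B : Matrix (Fin n) (Fin n) ℂ := M⁻¹ * (Matrix.diagonal d)ᴴ * M with hBdef
  have hdet : IsUnit M.det := hM.det_pos.ne'.isUnit
  have hB0 : ∀ k l, k ≠ l → B k l = 0 := by
    intro k l hkl
    have h1 := congrFun (congrFun hcomm k) l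
    simp only [Matrix.mul_apply] at h1
    have h1 : d k * B k l = B k l * d l := by
      have h2 := congrArg (fun A : Matrix (Fin n) (Fin n) ℂ => A k l) hcomm
      simpa [Matrix.diagonal_mul, Matrix.mul_diagonal] using h2
    have : B k l * (d k - d l) = 0 := by ring_nf; linear_combination h1
    rcases mul_eq_zero.mp this with h | h
    · exact h
    · exact absurd (hd (sub_eq_zero.mp h)) hkl
  have hMB : M * B = (Matrix.diagonal d)ᴴ * M := by
    rw [hBdef, ← Matrix.mul_assoc, ← Matrix.mul_assoc, Matrix.mul_nonsing_inv _ hdet,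
      Matrix.one_mul]
  have hentry : ∀ k l, M k l * B l l = (starRingEnd ℂ) (d k) * M k l := by
    intro k l
    have h := congrArg (fun A : Matrix (Fin n) (Fin n) ℂ => A k l) hMB
    simp only [Matrix.mul_apply] at h
    rw [Finset.sum_eq_single l (fun b _ hb => by rw [hB0 b l hb, mul_zero])
      (fun hl => absurd (Finset.mem_univ l) hl)] at h
    rw [h]
    rw [Finset.sum_eq_single k (fun b _ hb => by
        rw [Matrix.conjTranspose_apply, Matrix.diagonal_apply_ne d hb]; simp)
      (fun hk => absurd (Finset.mem_univ k) hk)]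
    rw [Matrix.conjTranspose_apply, Matrix.diagonal_apply_eq]
    rfl
  have hBjj : B j j = (starRingEnd ℂ) (d j) := by
    have h := hentry j j
    have hMjj : M j j ≠ 0 := (aux_posdef_diag M hM j).ne'
    have h2 : M j j * B j j = M j j * ((starRingEnd ℂ) (d j)) := by rw [h]; ring
    exact mul_left_cancel₀ hMjj h2
  have h := hentry i j
  rw [hBjj] at h
  have hne : (starRingEnd ℂ) (d j) - (starRingEnd ℂ) (d i) ≠ 0 := by
    intro hc
    have h1 : (starRingEnd ℂ) (d j) = (starRingEnd ℂ) (d i) := sub_eq_zero.mp hc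
    have h2 : d j = d i := (starRingEnd ℂ).injective h1
    exact hij (hd h2.symm)
  have : M i j * ((starRingEnd ℂ) (d j) - (starRingEnd ℂ) (d i)) = 0 := by
    linear_combination h
  rcases mul_eq_zero.mp this with h' | h'
  · exact h'
  · exact absurd h' hne

-- gram matrix of the pushforward metric is diagonal with entries H
private lemma aux_gram_push (r : ℕ) (S : Set (ℂ × ℂ)) (H : ℂ × ℂ → ℝ)
    (U : Set ℂ) (s : Fin r → ℂ → ℂ) (hs : IsSectionSystem r S U s) (z : ℂ) (hz : z ∈ U) :
    gramMatrix r (fun q q' : ℂ × ℂ => if q = q' ∧ q ∈ S then ((H q : ℝ) : ℂ) else 0) s z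
      = Matrix.diagonal (fun i => ((H (z, s i z) : ℝ) : ℂ)) := by
  classical
  ext i j
  show (if (z, s i z) = (z, s j z) ∧ (z, s i z) ∈ S then ((H (z, s i z) : ℝ) : ℂ) else 0)
    = Matrix.diagonal (fun i => ((H (z, s i z) : ℝ) : ℂ)) i j
  by_cases hij : i = j
  · subst hij
    rw [if_pos ⟨rfl, hs.2.1 i z hz⟩, Matrix.diagonal_apply_eq]
  · rw [if_neg, Matrix.diagonal_apply_ne _ hij]
    rintro ⟨he, -⟩
    exact hij (hs.2.2.2 z hz (congrArg Prod.snd he))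

-- structure lemma for decoupled harmonic metrics: the gram matrix is diagonal with
-- positive real entries
private lemma aux_gram_structure (r : ℕ) (S : Set (ℂ × ℂ)) (Y : Set ℂ)
    (h : ℂ × ℂ → ℂ × ℂ → ℂ)
    (hsym : ∀ q q', h q q' = starRingEnd ℂ (h q' q))
    (hdec : IsDecoupledHarmonicMetric r S Y h)
    (U : Set ℂ) (hU : IsOpen U) (hUY : U ⊆ Y) (s : Fin r → ℂ → ℂ)
    (hs : IsSectionSystem r S U s) (z : ℂ) (hz : z ∈ U) :
    gramMatrix r h s z
      = Matrix.diagonal (fun i => (((h (z, s i z) (z, s i z)).re : ℝ) : ℂ)) ∧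
    ∀ i, 0 < (h (z, s i z) (z, s i z)).re := by
  classical
  obtain ⟨hpos, hflat, hcomm⟩ := hdec U hU hUY s hs
  have hMpos := hpos z hz
  have hdiagpos : ∀ i, 0 < (h (z, s i z) (z, s i z)).re := by
    intro i
    have := aux_posdef_diag _ hMpos i
    rw [Complex.lt_def] at this
    simpa [gramMatrix] using this.1
  refine ⟨?_, hdiagpos⟩
  ext i j
  by_cases hij : i = j
  · subst hij
    rw [Matrix.diagonal_apply_eq]
    have hreal : (starRingEnd ℂ) (gramMatrix r h s z i i) = gramMatrix r h s z i i :=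
      (hsym _ _).symm
    have := Complex.conj_eq_iff_re.mp hreal
    exact this.symm
  · rw [Matrix.diagonal_apply_ne _ hij]
    exact aux_gram_offdiag _ _ hMpos (hs.2.2.2 z hz) (hcomm z hz) hij

theorem stmt15 (r : ℕ) (hr : 0 < r) (S : Set (ℂ × ℂ)) (Y : Set ℂ) (hY : IsOpen Y)
    (hS : ∀ q ∈ S, q.1 ∈ Y)
    (hcov : ∀ y ∈ Y, ∃ U : Set ℂ, IsOpen U ∧ y ∈ U ∧ U ⊆ Y ∧
      ∃ s : Fin r → ℂ → ℂ, IsSectionSystem r S U s) :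
    Set.BijOn
      (fun H : ℂ × ℂ → ℝ => fun q q' : ℂ × ℂ =>
        if q = q' ∧ q ∈ S then ((H q : ℝ) : ℂ) else 0)
      {H : ℂ × ℂ → ℝ | (∀ q ∈ S, 0 < H q) ∧ (∀ q ∉ S, H q = 1) ∧
        IsFlatLineMetric r S Y H}
      {h : ℂ × ℂ → ℂ × ℂ → ℂ | (∀ q q', h q q' = starRingEnd ℂ (h q' q)) ∧
        (∀ q q' : ℂ × ℂ, (q ∉ S ∨ q' ∉ S ∨ q.1 ≠ q'.1) → h q q' = 0) ∧
        IsDecoupledHarmonicMetric r S Y h} := by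
  classical
  constructor
  · -- MapsTo
    rintro H ⟨hHpos, hHone, hHflat⟩
    refine ⟨?_, ?_, ?_⟩ <;> beta_reduce
    · intro q q'
      by_cases hq : q = q'
      · subst hq
        by_cases hqS : q ∈ S
        · rw [if_pos ⟨rfl, hqS⟩]
          exact (Complex.conj_ofReal _).symm
        · rw [if_neg (fun hc : q = q ∧ q ∈ S => hqS hc.2)]
          simp
      · rw [if_neg (fun hc : q = q' ∧ q ∈ S => hq hc.1),
          if_neg (fun hc : q' = q ∧ q' ∈ S => hq hc.1.symm), map_zero]
    · intro q q' hcase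
      rw [if_neg]
      rintro ⟨rfl, hqS⟩
      rcases hcase with hc | hc | hc
      · exact hc hqS
      · exact hc hqS
      · exact hc rfl
    · intro U hU hUY s hs
      have hgram := fun z hz => aux_gram_push r S H U s hs z hz
      refine ⟨?_, ?_, ?_⟩
      · intro z hz
        rw [hgram z hz]
        refine Matrix.posDef_diagonal_iff.mpr fun i => ?_
        rw [Complex.lt_def]
        exact ⟨by simpa using hHpos _ (hs.2.1 i z hz), by simp⟩
      · intro z hz
        choose V hV g hgdiff hgprop using fun i => hHflat U hU hUY s hs i z hz
        refine ⟨⋂ i, V i, Filter.iInter_mem.mpr hV,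
          fun w => Matrix.diagonal (fun i => Complex.exp (g i w / 2)), ?_, ?_⟩
        · intro i j
          by_cases hij : i = j
          · subst hij
            simp only [Matrix.diagonal_apply_eq]
            exact (((hgdiff i).mono (Set.inter_subset_inter_left U
              (Set.iInter_subset V i))).div_const 2).cexp
          · simp only [Matrix.diagonal_apply_ne _ hij]
            exact differentiableOn_const 0
        · intro w hw
          have hwU : w ∈ U := hw.2
          have hwi : ∀ i, w ∈ V i ∩ U := fun i => ⟨Set.mem_iInter.mp hw.1 i, hw.2⟩
          constructor
          · rw [Matrix.det_diagonal]
            exact isUnit_iff_ne_zero.mpr (Finset.prod_ne_zero_iff.mpr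
              fun i _ => Complex.exp_ne_zero _)
          · rw [hgram w hwU, Matrix.diagonal_conjTranspose, Matrix.diagonal_mul_diagonal]
            refine congrArg Matrix.diagonal (funext fun i => ?_)
            have hHw := hgprop i w (hwi i)
            have hkey : star (Complex.exp (g i w / 2)) * Complex.exp (g i w / 2)
                = Complex.exp (((g i w).re : ℂ)) := by
              show (starRingEnd ℂ) (Complex.exp (g i w / 2)) * Complex.exp (g i w / 2) = _
              rw [← Complex.exp_conj, ← Complex.exp_add]
              congr 1
              have h2 : (starRingEnd ℂ) (2 : ℂ) = 2 := map_ofNat _ 2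
              rw [map_div₀, h2, ← add_div, add_comm, Complex.add_conj]
              push_cast
              ring
            rw [Pi.star_apply, hkey, ← Complex.ofReal_exp, hHw]
      · intro z hz
        rw [hgram z hz]
        simp only [Matrix.inv_diagonal, Matrix.diagonal_conjTranspose,
          Matrix.diagonal_mul_diagonal]
        refine congrArg Matrix.diagonal (funext fun i => ?_)
        simp only [Pi.star_apply, Pi.inv_apply]
        ring
  constructor
  · -- InjOn
    rintro H1 ⟨-, h1one, -⟩ H2 ⟨-, h2one, -⟩ heq
    funext q
    by_cases hq : q ∈ S
    · have := congrFun (congrFun heq q) q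
      beta_reduce at this
      rw [if_pos (⟨rfl, hq⟩ : q = q ∧ q ∈ S), if_pos (⟨rfl, hq⟩ : q = q ∧ q ∈ S)] at this
      exact_mod_cast this
    · rw [h1one q hq, h2one q hq]
  · -- SurjOn
    rintro h ⟨hsym, hvan, hdec⟩
    have hkey := fun U hU hUY s hs z hz =>
      aux_gram_structure r S Y h hsym hdec U hU hUY s hs z hz
    have hpos : ∀ q ∈ S, 0 < (h q q).re := by
      intro q hq
      obtain ⟨U, hU, hzU, hUY, s, hs⟩ := hcov q.1 (hS q hq)
      obtain ⟨i, hi⟩ := hs.2.2.1 q.1 hzU q hq rfl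
      have := (hkey U hU hUY s hs q.1 hzU).2 i
      rwa [← hi] at this
    have hreal : ∀ q ∈ S, (((h q q).re : ℝ) : ℂ) = h q q :=
      fun q _ => Complex.conj_eq_iff_re.mp (hsym q q).symm
    refine ⟨fun q => if q ∈ S then (h q q).re else 1, ⟨?_, ?_, ?_⟩, ?_⟩
    · intro q hq
      beta_reduce
      rw [if_pos hq]
      exact hpos q hq
    · intro q hq
      beta_reduce
      rw [if_neg hq]
    · -- flat line metric
      intro U hU hUY s hs i z hz
      obtain ⟨hpos', hflat, hcomm⟩ := hdec U hU hUY s hs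
      obtain ⟨V, hV, G, hGdiff, hG⟩ := hflat z hz
      have hW : V ∩ U ∈ nhds z := Filter.inter_mem hV (hU.mem_nhds hz)
      have hzW : z ∈ V ∩ U := mem_of_mem_nhds hW
      set m : ℂ → ℝ := fun w => (h (w, s i w) (w, s i w)).re with hm
      have hmpos : ∀ w ∈ U, 0 < m w := fun w hw => (hkey U hU hUY s hs w hw).2 i
      have hgramd : ∀ w ∈ U, gramMatrix r h s w
          = Matrix.diagonal (fun j => (((h (w, s j w) (w, s j w)).re : ℝ) : ℂ)) :=
        fun w hw => (hkey U hU hUY s hs w hw).1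
      have hdetz : (G z).det ≠ 0 := (hG z hzW).1.ne_zero
      obtain ⟨k, hk⟩ : ∃ k, G z k i ≠ 0 := by
        by_contra hcon
        push_neg at hcon
        exact hdetz (Matrix.det_eq_zero_of_column_eq_zero i hcon)
      set dG : ℂ → ℂ := fun w => (G w).det with hdG
      set adj : ℂ → ℂ := fun w => (G w).adjugate i k with hadjdef
      have hid : ∀ w ∈ V ∩ U,
          (starRingEnd ℂ) (G w k i) * dG w = ((m w : ℝ) : ℂ) * adj w := by
        intro w hw
        have h1 : (G w)ᴴ = gramMatrix r h s w * (G w)⁻¹ := by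
          rw [(hG w hw).2, Matrix.mul_assoc, Matrix.mul_nonsing_inv _ (hG w hw).1,
            Matrix.mul_one]
        have h2 := congrArg (fun A : Matrix (Fin r) (Fin r) ℂ => A i k) h1
        rw [hgramd w hw.2] at h2
        simp only [Matrix.conjTranspose_apply, Matrix.diagonal_mul] at h2
        have h3 : (G w)⁻¹ i k = (dG w)⁻¹ * adj w := by
          rw [Matrix.inv_def, Matrix.smul_apply, Ring.inverse_eq_inv', smul_eq_mul]
        rw [h3] at h2
        have hdw : dG w ≠ 0 := (hG w hw).1.ne_zero
        have : star (G w k i) = (starRingEnd ℂ) (G w k i) := rfl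
        rw [this] at h2
        rw [h2]
        field_simp
        exact mul_comm _ _
      have hadjnz : ∀ w ∈ V ∩ U, G w k i ≠ 0 → adj w ≠ 0 := by
        intro w hw hGw hadj0
        have := hid w hw
        rw [hadj0, mul_zero, mul_eq_zero] at this
        rcases this with hc | hc
        · exact hGw (by simpa using (starRingEnd ℂ).injective (by simpa using hc))
        · exact (hG w hw).1.ne_zero hc
      set f : ℂ → ℂ := fun w => G w k i * dG w / adj w with hf
      have habs : ∀ w ∈ V ∩ U, G w k i ≠ 0 → ‖f w‖ = m w := by
        intro w hw hGw
        have hidw := hid w hw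
        have hadj := hadjnz w hw hGw
        have habs2 := congrArg norm hidw
        rw [norm_mul, norm_mul, Complex.norm_conj, Complex.norm_real, Real.norm_eq_abs,
          abs_of_pos (hmpos w hw.2)] at habs2
        show ‖G w k i * dG w / adj w‖ = m w
        rw [norm_div, norm_mul, habs2, mul_div_assoc,
          div_self (by simpa using hadj), mul_one]
      have hGdiffki : DifferentiableOn ℂ (fun w => G w k i) (V ∩ U) := hGdiff k i
      have hdGdiff : DifferentiableOn ℂ dG (V ∩ U) := aux_diffOn_det G (V ∩ U) hGdiff
      have hadjdiff : DifferentiableOn ℂ adj (V ∩ U) := by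
        have hae : adj = fun w => ((G w).updateRow k (Pi.single i 1)).det :=
          funext fun w => Matrix.adjugate_apply (G w) i k
        rw [hae]
        apply aux_diffOn_det
        intro a b
        by_cases hak : a = k
        · simp only [Matrix.updateRow_apply, hak, if_pos rfl]
          exact differentiableOn_const _
        · simp only [Matrix.updateRow_apply, if_neg hak]
          exact hGdiff a b
      have hcz : ContinuousAt (fun w => G w k i) z := hGdiffki.continuousOn.continuousAt hW
      have hcdG : ContinuousAt dG z := hdGdiff.continuousOn.continuousAt hW
      have hcadj : ContinuousAt adj z := hadjdiff.continuousOn.continuousAt hW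
      have hadjz : adj z ≠ 0 := hadjnz z hzW hk
      have hfzabs : ‖f z‖ = m z := habs z hzW hk
      have hfz0 : f z ≠ 0 := by
        intro e
        rw [e, norm_zero] at hfzabs
        exact (hmpos z hz).ne hfzabs
      set c : ℂ := ((‖f z‖ : ℝ) : ℂ) / f z with hc
      have hcabs : ‖c‖ = 1 := by
        rw [hc, norm_div, Complex.norm_real, norm_norm,
          div_self (norm_ne_zero_iff.mpr hfz0)]
      have hcfz : c * f z = ((m z : ℝ) : ℂ) := by
        rw [hc, div_mul_cancel₀ _ hfz0, hfzabs]
      have hslit : c * f z ∈ Complex.slitPlane :=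
        hcfz ▸ Complex.ofReal_mem_slitPlane.mpr (hmpos z hz)
      have hfc : ContinuousAt f z := (hcz.mul hcdG).div hcadj hadjz
      have hφc : ContinuousAt (fun w => c * f w) z := continuousAt_const.mul hfc
      have hevk : {w | G w k i ≠ 0} ∈ nhds z := hcz.eventually_ne hk
      have hevadj : {w | adj w ≠ 0} ∈ nhds z := hcadj.eventually_ne hadjz
      have hevslit : (fun w => c * f w) ⁻¹' Complex.slitPlane ∈ nhds z :=
        hφc.preimage_mem_nhds (Complex.isOpen_slitPlane.mem_nhds hslit)
      refine ⟨V ∩ {w | G w k i ≠ 0} ∩ {w | adj w ≠ 0}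
          ∩ ((fun w => c * f w) ⁻¹' Complex.slitPlane),
        Filter.inter_mem (Filter.inter_mem (Filter.inter_mem hV hevk) hevadj) hevslit,
        fun w => Complex.log (c * f w), ?_, ?_⟩
      · intro w hw
        obtain ⟨⟨⟨⟨hwV, hwk⟩, hwadj⟩, hwslit⟩, hwU⟩ := hw
        have hsub : V ∩ {w | G w k i ≠ 0} ∩ {w | adj w ≠ 0}
            ∩ ((fun w => c * f w) ⁻¹' Complex.slitPlane) ∩ U ⊆ V ∩ U := by
          intro x hx
          exact ⟨hx.1.1.1.1, hx.2⟩
        have hfd : DifferentiableWithinAt ℂ f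
            (V ∩ {w | G w k i ≠ 0} ∩ {w | adj w ≠ 0}
              ∩ ((fun w => c * f w) ⁻¹' Complex.slitPlane) ∩ U) w := by
          apply DifferentiableWithinAt.div
          · exact ((hGdiffki.mono hsub) w ⟨⟨⟨⟨hwV, hwk⟩, hwadj⟩, hwslit⟩, hwU⟩).mul
              ((hdGdiff.mono hsub) w ⟨⟨⟨⟨hwV, hwk⟩, hwadj⟩, hwslit⟩, hwU⟩)
          · exact (hadjdiff.mono hsub) w ⟨⟨⟨⟨hwV, hwk⟩, hwadj⟩, hwslit⟩, hwU⟩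
          · exact hwadj
        exact (Complex.differentiableAt_log hwslit).comp_differentiableWithinAt w
          (hfd.const_mul c)
      · intro w hw
        obtain ⟨⟨⟨⟨hwV, hwk⟩, hwadj⟩, hwslit⟩, hwU⟩ := hw
        beta_reduce
        rw [if_pos (hs.2.1 i w hwU), Complex.log_re, norm_mul, hcabs, one_mul,
          habs w ⟨hwV, hwU⟩ hwk, Real.exp_log (hmpos w hwU)]
    · -- pushforward of this metric is h
      funext q q'
      beta_reduce
      by_cases hcond : q = q' ∧ q ∈ S
      · obtain ⟨rfl, hq⟩ := hcond
        rw [if_pos ⟨rfl, hq⟩, if_pos hq]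
        exact hreal q hq
      · rw [if_neg hcond]
        by_cases hqS : q ∈ S
        · by_cases hq'S : q' ∈ S
          · by_cases hfib : q.1 = q'.1
            · have hne : q ≠ q' := fun e => hcond ⟨e, hqS⟩
              obtain ⟨U, hU, hzU, hUY, s, hs⟩ := hcov q.1 (hS q hqS)
              obtain ⟨i, hi⟩ := hs.2.2.1 q.1 hzU q hqS rfl
              obtain ⟨j, hj⟩ := hs.2.2.1 q.1 hzU q' hq'S hfib.symm
              have hij : i ≠ j := by
                intro e
                rw [e] at hi
                exact hne (hi.trans hj.symm)
              have hg := congrArg (fun A : Matrix (Fin r) (Fin r) ℂ => A i j)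
                ((hkey U hU hUY s hs q.1 hzU).1)
              simp only [Matrix.diagonal_apply_ne _ hij] at hg
              have : gramMatrix r h s q.1 i j = h q q' := by
                rw [hi, hj]
                rfl
              rw [← this, hg]
            · exact (hvan q q' (Or.inr (Or.inr hfib))).symm
          · exact (hvan q q' (Or.inr (Or.inl hq'S))).symm
        · exact (hvan q q' (Or.inl hqS)).symm
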